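/- Let R be a non-singular m×m rational matrix over k(x) with det R = c·α/β where c ∈ k*, α, β ∈ k[x] monic and coprime. Then β·φ_m(R^{-1}) = α·φ_m(R). -/

import Mathlib

open Polynomial

/-- The determinantal denominator `φ_ℓ(R)`: the monic least common denominator in `k[x]`
of all minors of the rational matrix `R` of size at most `ℓ` (with `φ_0(R) = 1`). -/
noncomputable def detDen {k : Type*} [Field k] [DecidableEq k] {m p : ℕ} (ℓ : ℕ)
    (R : Matrix (Fin m) (Fin p) (RatFunc k)) : Polynomial k :=
  (Finset.univ : Finset (Σ s : Fin (ℓ + 1), (Fin (s : ℕ) → Fin m) × (Fin (s : ℕ) → Fin p))).lcm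
    (fun t => ((R.submatrix t.2.1 t.2.2).det).denom)

section Aux

open Matrix

variable {k : Type*} [Field k] [DecidableEq k]

set_option linter.unusedSectionVars false
set_option linter.unusedVariables false
set_option linter.unnecessarySeqFocus false
set_option linter.unusedTactic false

lemma RatFuncAux.denom_C_mul (u : k) (hu : u ≠ 0) (f : RatFunc k) :
    (RatFunc.C u * f).denom = f.denom := by
  apply Polynomial.eq_of_monic_of_associated (RatFunc.monic_denom _) (RatFunc.monic_denom _)
  apply associated_of_dvd_dvd
  · have := RatFunc.denom_mul_dvd (RatFunc.C u) f
    rwa [← RatFunc.algebraMap_C, RatFunc.denom_algebraMap, one_mul] at this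
  · have := RatFunc.denom_mul_dvd (RatFunc.C u⁻¹) (RatFunc.C u * f)
    rw [← mul_assoc, ← _root_.map_mul, inv_mul_cancel₀ hu, _root_.map_one, one_mul,
      ← RatFunc.algebraMap_C, RatFunc.denom_algebraMap, one_mul] at this
    exact this

lemma RatFuncAux.denom_eq_of_coprime {p q : Polynomial k} (hq : q.Monic) (h : IsCoprime p q) :
    (algebraMap (Polynomial k) (RatFunc k) p / algebraMap (Polynomial k) (RatFunc k) q).denom
      = q := by
  set g := algebraMap (Polynomial k) (RatFunc k) p / algebraMap (Polynomial k) (RatFunc k) q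
    with hg
  have hq0 : q ≠ 0 := hq.ne_zero
  have hd0 : g.denom ≠ 0 := RatFunc.denom_ne_zero g
  have hd : g.denom ∣ q := RatFunc.denom_div_dvd p q
  have hrepr2 : algebraMap (Polynomial k) (RatFunc k) g.num /
      algebraMap (Polynomial k) (RatFunc k) g.denom
      = algebraMap (Polynomial k) (RatFunc k) p / algebraMap (Polynomial k) (RatFunc k) q := by
    rw [RatFunc.num_div_denom g, hg]
  rw [div_eq_div_iff (RatFunc.algebraMap_ne_zero hd0) (RatFunc.algebraMap_ne_zero hq0),
    ← _root_.map_mul, ← _root_.map_mul] at hrepr2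
  have hcross : g.num * q = p * g.denom := RatFunc.algebraMap_injective (K := k) hrepr2
  have hqd : q ∣ g.denom := by
    apply (h.symm).dvd_of_dvd_mul_left
    exact ⟨g.num, by rw [← hcross]; ring⟩
  exact Polynomial.eq_of_monic_of_associated (RatFunc.monic_denom g) hq
    (associated_of_dvd_dvd hd hqd)

lemma RatFuncAux.keyP (α β : Polynomial k) (hα : α ≠ 0) (f : RatFunc k) :
    β * ((algebraMap (Polynomial k) (RatFunc k) β /
        algebraMap (Polynomial k) (RatFunc k) α) * f).denom ∣ α * lcm f.denom β := by
  by_cases hf : f = 0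
  · subst hf
    rw [mul_zero, RatFunc.denom_zero, mul_one]
    exact dvd_mul_of_dvd_right (dvd_lcm_right _ _) _
  set g := (algebraMap (Polynomial k) (RatFunc k) β /
        algebraMap (Polynomial k) (RatFunc k) α) * f with hg
  set n := f.num
  set e := f.denom
  set d := g.denom
  set N := g.num
  have he0 : e ≠ 0 := RatFunc.denom_ne_zero f
  have hd0 : d ≠ 0 := RatFunc.denom_ne_zero g
  have hae : α * e ≠ 0 := mul_ne_zero hα he0
  have hrepr : g = algebraMap (Polynomial k) (RatFunc k) (β * n) /
        algebraMap (Polynomial k) (RatFunc k) (α * e) := by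
    rw [hg, _root_.map_mul, _root_.map_mul]
    conv_lhs => rw [← RatFunc.num_div_denom f]
    rw [div_mul_div_comm]
  have hd : d ∣ α * e := by
    have := RatFunc.denom_div_dvd (β * n) (α * e)
    rw [← hrepr] at this
    exact this
  obtain ⟨w, hw⟩ := hd
  have hw0 : w ≠ 0 := by
    intro h; rw [h, mul_zero] at hw; exact hae hw
  have hrepr2 : algebraMap (Polynomial k) (RatFunc k) N /
      algebraMap (Polynomial k) (RatFunc k) d = algebraMap (Polynomial k) (RatFunc k) (β * n) /
        algebraMap (Polynomial k) (RatFunc k) (α * e) := by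
    rw [RatFunc.num_div_denom g, hrepr]
  rw [div_eq_div_iff (RatFunc.algebraMap_ne_zero hd0) (RatFunc.algebraMap_ne_zero hae)] at hrepr2
  have hcross : N * (α * e) = β * n * d := by
    rw [← _root_.map_mul, ← _root_.map_mul] at hrepr2
    exact RatFunc.algebraMap_injective (K := k) hrepr2
  have hNw : N * w = β * n := by
    have h2 : (N * w) * d = (β * n) * d := by
      calc (N * w) * d = N * (d * w) := by ring
        _ = N * (α * e) := by rw [← hw]
        _ = β * n * d := hcross
    exact mul_right_cancel₀ hd0 h2
  have hgw : gcd e β ∣ w := by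
    have h1 : gcd e β ∣ N * w := by
      rw [hNw]; exact dvd_mul_of_dvd_left (gcd_dvd_right e β) n
    have h2 : gcd e β ∣ d * w := by
      rw [← hw]; exact dvd_mul_of_dvd_right (gcd_dvd_left e β) α
    have h3 : gcd e β ∣ gcd (N * w) (d * w) := dvd_gcd h1 h2
    rw [gcd_mul_right] at h3
    have hu : IsUnit (gcd N d) :=
      (RatFunc.isCoprime_num_denom g).isUnit_of_dvd' (gcd_dvd_left N d) (gcd_dvd_right N d)
    calc gcd e β ∣ gcd N d * normalize w := h3
      _ ∣ normalize w := hu.mul_left_dvd.mpr dvd_rfl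
      _ ∣ w := (normalize_associated w).dvd
  rw [← mul_dvd_mul_iff_right hw0]
  calc β * d * w = α * (e * β) := by rw [mul_assoc, ← hw]; ring
    _ ∣ α * (gcd e β * lcm e β) := mul_dvd_mul_left α (gcd_mul_lcm e β).symm.dvd
    _ = α * lcm e β * gcd e β := by ring
    _ ∣ α * lcm e β * w := mul_dvd_mul_left _ hgw

lemma jacobi_block {K : Type*} [Field K] {s t : Type*} [Fintype s] [Fintype t]
    [DecidableEq s] [DecidableEq t] (A : Matrix (s ⊕ t) (s ⊕ t) K) (hA : IsUnit A.det) :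
    ((A⁻¹).toBlocks₁₁).det * A.det = (A.toBlocks₂₂).det := by
  have hAB : A * A⁻¹ = 1 := mul_nonsing_inv _ hA
  set B := A⁻¹ with hB
  have key : A * (fromBlocks B.toBlocks₁₁ 0 B.toBlocks₂₁ 1) =
      fromBlocks 1 A.toBlocks₁₂ 0 A.toBlocks₂₂ := by
    have hA' : A = fromBlocks A.toBlocks₁₁ A.toBlocks₁₂ A.toBlocks₂₁ A.toBlocks₂₂ :=
      (fromBlocks_toBlocks A).symm
    have hB' : B = fromBlocks B.toBlocks₁₁ B.toBlocks₁₂ B.toBlocks₂₁ B.toBlocks₂₂ :=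
      (fromBlocks_toBlocks B).symm
    have h1 : fromBlocks (A.toBlocks₁₁ * B.toBlocks₁₁ + A.toBlocks₁₂ * B.toBlocks₂₁)
        (A.toBlocks₁₁ * B.toBlocks₁₂ + A.toBlocks₁₂ * B.toBlocks₂₂)
        (A.toBlocks₂₁ * B.toBlocks₁₁ + A.toBlocks₂₂ * B.toBlocks₂₁)
        (A.toBlocks₂₁ * B.toBlocks₁₂ + A.toBlocks₂₂ * B.toBlocks₂₂) = 1 := by
      rw [← fromBlocks_multiply, ← hA', ← hB', hAB]
    rw [← fromBlocks_one] at h1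
    have h11 := congrArg Matrix.toBlocks₁₁ h1
    have h21 := congrArg Matrix.toBlocks₂₁ h1
    simp only [toBlocks_fromBlocks₁₁, toBlocks_fromBlocks₂₁] at h11 h21
    conv_lhs => rw [hA']
    rw [fromBlocks_multiply]
    rw [h11, h21]
    congr 1 <;> simp [Matrix.mul_one, Matrix.mul_zero]
  have hdet := congrArg Matrix.det key
  rw [det_mul, det_fromBlocks_zero₁₂, det_fromBlocks_zero₂₁] at hdet
  simp only [det_one, one_mul, mul_one] at hdet
  rw [mul_comm]
  exact hdet

lemma exists_extend {s m : ℕ} (f : Fin s → Fin m) (hf : Function.Injective f) :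
    ∃ e : Fin s ⊕ Fin (m - s) ≃ Fin m, ∀ a, e (Sum.inl a) = f a := by
  classical
  have hcard : Fintype.card (↥(Set.range f)ᶜ) = m - s := by
    rw [Fintype.card_compl_set]
    have : Fintype.card (Set.range f) = s := by
      rw [Set.card_range_of_injective hf, Fintype.card_fin]
    rw [this, Fintype.card_fin]
  refine ⟨(Equiv.sumCongr (Equiv.ofInjective f hf)
    (Fintype.equivFinOfCardEq hcard).symm).trans (Equiv.Set.sumCompl (Set.range f)), ?_⟩
  intro a
  simp

lemma mul_finset_lcm_dvd {ι : Type*} [DecidableEq ι] {S : Finset ι} {d : ι → Polynomial k}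
    {β Z : Polynomial k} (hβ : β ∣ Z) (h : ∀ i ∈ S, β * d i ∣ Z) : β * S.lcm d ∣ Z := by
  classical
  induction S using Finset.induction with
  | empty => simpa using hβ
  | insert a S hnotmem ih =>
    rw [Finset.lcm_insert]
    have h1 : β * d a ∣ Z := h a (Finset.mem_insert_self a S)
    have h2 : β * S.lcm d ∣ Z := ih (fun i hi => h i (Finset.mem_insert_of_mem hi))
    have hass : Associated (β * lcm (d a) (S.lcm d)) (lcm (β * d a) (β * S.lcm d)) := by
      rw [lcm_mul_left]
      exact ((normalize_associated β).symm.mul_right _)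
    exact hass.dvd.trans (lcm_dvd h1 h2)

set_option maxHeartbeats 1000000 in
/-- The master divisibility lemma. -/
lemma detDen_inverse_dvd (m : ℕ)
    (R : Matrix (Fin m) (Fin m) (RatFunc k)) (hR : IsUnit R.det)
    (c : k) (hc : c ≠ 0) (α β : Polynomial k) (hα : α.Monic) (hβ : β.Monic)
    (hcop : IsCoprime α β)
    (hdet : R.det = RatFunc.C c * (algebraMap (Polynomial k) (RatFunc k) α /
      algebraMap (Polynomial k) (RatFunc k) β)) :
    β * detDen m R⁻¹ ∣ α * detDen m R := by
  classical
  have hα0 : α ≠ 0 := hα.ne_zero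
  have hβ0 : β ≠ 0 := hβ.ne_zero
  -- β is the denominator of det R, hence divides detDen m R
  have hdenomdet : (R.det).denom = β := by
    rw [hdet, RatFuncAux.denom_C_mul c hc, RatFuncAux.denom_eq_of_coprime hβ hcop]
  have hβdvd : β ∣ detDen m R := by
    rw [← hdenomdet]
    set idm : Fin ((Fin.last m : Fin (m + 1)) : ℕ) → Fin m := Fin.cast (Fin.val_last m) with hidm
    have hsub : R.submatrix idm idm = R := by
      ext i j; rfl
    have hmem := Finset.dvd_lcm
      (f := fun t : Σ s : Fin (m + 1), (Fin (s : ℕ) → Fin m) × (Fin (s : ℕ) → Fin m) =>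
        ((R.submatrix t.2.1 t.2.2).det).denom)
      (Finset.mem_univ ⟨Fin.last m, (idm, idm)⟩)
    simp only [hsub] at hmem
    exact hmem
  apply mul_finset_lcm_dvd (dvd_mul_of_dvd_right hβdvd α)
  rintro ⟨s, t1, t2⟩ -
  by_cases h1 : Function.Injective t1
  · by_cases h2 : Function.Injective t2
    · -- main case
      obtain ⟨e₁, he₁⟩ := exists_extend t1 h1
      obtain ⟨e₂, he₂⟩ := exists_extend t2 h2
      set A := R.submatrix e₂ e₁ with hA
      have hAinv : A⁻¹ = (R⁻¹).submatrix e₁ e₂ := Matrix.inv_submatrix_equiv R e₂ e₁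
      set σ : Equiv.Perm (Fin (s : ℕ) ⊕ Fin (m - (s : ℕ))) := e₂.trans e₁.symm with hσ
      have hsub : A = (R.submatrix e₁ e₁).submatrix σ id := by
        ext i j
        simp [hA, hσ, Matrix.submatrix_apply]
      have hunitA : IsUnit A.det := by
        rw [← Matrix.isUnit_iff_isUnit_det] at hR ⊢
        exact (Matrix.isUnit_submatrix_equiv e₂ e₁).mpr hR
      have hjac := jacobi_block A hunitA
      set ε : ℤˣ := Equiv.Perm.sign σ with hε
      have hdetA : A.det = RatFunc.C (((ε : ℤ) : k)) * R.det := by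
        rw [hsub, Matrix.det_permute, Matrix.det_submatrix_equiv_self]
        congr 1
        rw [← RatFunc.algebraMap_C]
        push_cast
        simp [hε]
      have hblock1 : (A⁻¹).toBlocks₁₁ = (R⁻¹).submatrix t1 t2 := by
        ext i j
        rw [hAinv]
        simp [Matrix.toBlocks₁₁, Matrix.submatrix_apply, he₁, he₂]
      set u1 : Fin (m - (s : ℕ)) → Fin m := fun i => e₂ (Sum.inr i) with hu1
      set u2 : Fin (m - (s : ℕ)) → Fin m := fun i => e₁ (Sum.inr i) with hu2
      have hblock2 : A.toBlocks₂₂ = R.submatrix u1 u2 := by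
        ext i j
        simp [hA, Matrix.toBlocks₂₂, Matrix.submatrix_apply, hu1, hu2]
      rw [hblock1, hblock2] at hjac
      -- hjac : X * A.det = Mdet
      set u : k := ((ε : ℤ) : k) * c with hu
      have hεk : ((ε : ℤ) : k) ≠ 0 := by
        rcases Int.units_eq_one_or ε with h | h <;> simp [h]
      have hune : u ≠ 0 := mul_ne_zero hεk hc
      have haα : algebraMap (Polynomial k) (RatFunc k) α ≠ 0 := RatFunc.algebraMap_ne_zero hα0
      have haβ : algebraMap (Polynomial k) (RatFunc k) β ≠ 0 := RatFunc.algebraMap_ne_zero hβ0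
      have hCu : (RatFunc.C u) ≠ 0 := by
        rw [← RatFunc.algebraMap_C]
        exact RatFunc.algebraMap_ne_zero (by simp [hune])
      have heq : ((R⁻¹).submatrix t1 t2).det * (RatFunc.C u * (algebraMap (Polynomial k) (RatFunc k) α /
          algebraMap (Polynomial k) (RatFunc k) β)) = (R.submatrix u1 u2).det := by
        rw [← hjac, hdetA, hdet, hu, _root_.map_mul]
        ring
      have hXval : ((R⁻¹).submatrix t1 t2).det =
          RatFunc.C u⁻¹ * ((algebraMap (Polynomial k) (RatFunc k) β /
          algebraMap (Polynomial k) (RatFunc k) α) * (R.submatrix u1 u2).det) := by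
        rw [map_inv₀, ← heq]
        have c1 : (RatFunc.C u)⁻¹ * RatFunc.C u = 1 := inv_mul_cancel₀ hCu
        have c2 : (algebraMap (Polynomial k) (RatFunc k) β /
            algebraMap (Polynomial k) (RatFunc k) α) * (algebraMap (Polynomial k) (RatFunc k) α /
            algebraMap (Polynomial k) (RatFunc k) β) = 1 := by
          rw [div_mul_div_comm, mul_comm]
          exact div_self (mul_ne_zero haα haβ)
        have cancel : (RatFunc.C u)⁻¹ * ((algebraMap (Polynomial k) (RatFunc k) β /
            algebraMap (Polynomial k) (RatFunc k) α) * (RatFunc.C u *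
            (algebraMap (Polynomial k) (RatFunc k) α /
            algebraMap (Polynomial k) (RatFunc k) β))) = 1 := by
          calc (RatFunc.C u)⁻¹ * ((algebraMap (Polynomial k) (RatFunc k) β /
              algebraMap (Polynomial k) (RatFunc k) α) * (RatFunc.C u *
              (algebraMap (Polynomial k) (RatFunc k) α /
              algebraMap (Polynomial k) (RatFunc k) β)))
              = ((RatFunc.C u)⁻¹ * RatFunc.C u) *
                ((algebraMap (Polynomial k) (RatFunc k) β /
                algebraMap (Polynomial k) (RatFunc k) α) *
                (algebraMap (Polynomial k) (RatFunc k) α /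
                algebraMap (Polynomial k) (RatFunc k) β)) := by ring
            _ = 1 := by rw [c1, c2, one_mul]
        conv_lhs => rw [← mul_one (((R⁻¹).submatrix t1 t2).det), ← cancel]
        ring
      have hdenomX : (((R⁻¹).submatrix t1 t2).det).denom =
          ((algebraMap (Polynomial k) (RatFunc k) β /
          algebraMap (Polynomial k) (RatFunc k) α) * (R.submatrix u1 u2).det).denom := by
        rw [hXval]
        exact RatFuncAux.denom_C_mul u⁻¹ (inv_ne_zero hune) _
      rw [hdenomX]
      have hkey := RatFuncAux.keyP α β hα0 (R.submatrix u1 u2).det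
      refine hkey.trans (mul_dvd_mul_left α (lcm_dvd ?_ hβdvd))
      have hmem := Finset.dvd_lcm
        (f := fun t : Σ s : Fin (m + 1), (Fin (s : ℕ) → Fin m) × (Fin (s : ℕ) → Fin m) =>
          ((R.submatrix t.2.1 t.2.2).det).denom)
        (Finset.mem_univ (⟨⟨m - (s : ℕ), by omega⟩, (u1, u2)⟩ :
          Σ s : Fin (m + 1), (Fin (s : ℕ) → Fin m) × (Fin (s : ℕ) → Fin m)))
      exact hmem
    · -- t2 not injective: a repeated column
      rw [Function.not_injective_iff] at h2
      obtain ⟨i, j, hij, hne⟩ := h2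
      have : ((R⁻¹).submatrix t1 t2).det = 0 :=
        det_zero_of_column_eq hne (fun l => by simp [Matrix.submatrix, hij])
      rw [this, RatFunc.denom_zero, mul_one]
      exact dvd_mul_of_dvd_right hβdvd α
  · rw [Function.not_injective_iff] at h1
    obtain ⟨i, j, hij, hne⟩ := h1
    have : ((R⁻¹).submatrix t1 t2).det = 0 :=
      det_zero_of_row_eq hne (by funext l; simp [Matrix.submatrix, hij])
    rw [this, RatFunc.denom_zero, mul_one]
    exact dvd_mul_of_dvd_right hβdvd α



lemma detDen_monic {m p : ℕ} (ℓ : ℕ) (R : Matrix (Fin m) (Fin p) (RatFunc k)) :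
    (detDen ℓ R).Monic := by
  have h0 : detDen ℓ R ≠ 0 := by
    rw [detDen, Ne, Finset.lcm_eq_zero_iff]
    rintro ⟨t, -, ht⟩
    exact RatFunc.denom_ne_zero _ ht
  have hnorm : normalize (detDen ℓ R) = detDen ℓ R := Finset.normalize_lcm
  rw [← hnorm]
  exact Polynomial.monic_normalize h0

end Aux

/-- Determinantal denominator of the inverse: if R is non-singular with
det R = c·α/β, c ∈ k*, α, β ∈ k[x] monic and coprime, then β·φ_m(R⁻¹) = α·φ_m(R). -/
theorem detDen_inverse (k : Type*) [Field k] [DecidableEq k] (m : ℕ)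
    (R : Matrix (Fin m) (Fin m) (RatFunc k)) (hR : IsUnit R.det)
    (c : k) (hc : c ≠ 0) (α β : Polynomial k) (hα : α.Monic) (hβ : β.Monic)
    (hcop : IsCoprime α β)
    (hdet : R.det = RatFunc.C c * (algebraMap (Polynomial k) (RatFunc k) α /
      algebraMap (Polynomial k) (RatFunc k) β)) :
    β * detDen m R⁻¹ = α * detDen m R := by
  have h1 := detDen_inverse_dvd m R hR c hc α β hα hβ hcop hdet
  have hR' : IsUnit (R⁻¹).det := R.isUnit_nonsing_inv_det hR
  have hinv : (R⁻¹)⁻¹ = R := Matrix.nonsing_inv_nonsing_inv R hR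
  have hdet' : (R⁻¹).det = RatFunc.C c⁻¹ * (algebraMap (Polynomial k) (RatFunc k) β /
      algebraMap (Polynomial k) (RatFunc k) α) := by
    rw [Matrix.det_nonsing_inv, hdet, Ring.inverse_eq_inv, mul_inv, map_inv₀, inv_div]
  have h2 := detDen_inverse_dvd m R⁻¹ hR' c⁻¹ (inv_ne_zero hc) β α hβ hα hcop.symm hdet'
  rw [hinv] at h2
  exact Polynomial.eq_of_monic_of_associated (hβ.mul (detDen_monic m R⁻¹))
    (hα.mul (detDen_monic m R)) (associated_of_dvd_dvd h1 h2)
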